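/- Let K_{SP} be a collection of vectors on S ⊎ P closed under subtraction, and K_{SQ} a collection on S ⊎ Q closed under addition, such that K_{SP} ∘ S ⊇ K_{SQ} ∘ S and K_{SP} × S ⊆ K_{SQ} × S. Then 0_{SQ} ∈ K_{SQ}, the matched composition K_{SP} ↔ K_{SQ} is closed under addition and contains the zero vector, and K_{SP} ↔ (K_{SP} ↔ K_{SQ}) = K_{SQ}. -/

import Mathlib

/-- Implicit inversion, basic form: for `K_SP` closed under subtraction and `K_SQ`
closed under addition with `K_SP ∘ S ⊇ K_SQ ∘ S` and `K_SP × S ⊆ K_SQ × S`, we get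
`0 ∈ K_SQ`, the matched composition `K_SP ↔ K_SQ` is closed under addition and
contains zero, and `K_SP ↔ (K_SP ↔ K_SQ) = K_SQ`. -/
theorem stmt9 {S P Q : Type*}
    (KSP : Set ((S → ℚ) × (P → ℚ))) (KSQ : Set ((S → ℚ) × (Q → ℚ)))
    (h0 : ((0, 0) : (S → ℚ) × (P → ℚ)) ∈ KSP)
    (hsub : ∀ x ∈ KSP, ∀ y ∈ KSP, x - y ∈ KSP)
    (hadd : ∀ x ∈ KSQ, ∀ y ∈ KSQ, x + y ∈ KSQ)
    (hres : {fS | ∃ fQ, (fS, fQ) ∈ KSQ} ⊆ {fS | ∃ fP, (fS, fP) ∈ KSP})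
    (hcon : {fS | ((fS, 0) : (S → ℚ) × (P → ℚ)) ∈ KSP} ⊆
      {fS | ((fS, 0) : (S → ℚ) × (Q → ℚ)) ∈ KSQ}) :
    ((0, 0) : (S → ℚ) × (Q → ℚ)) ∈ KSQ ∧
    (((0, 0) : (P → ℚ) × (Q → ℚ)) ∈
        {x : (P → ℚ) × (Q → ℚ) | ∃ fS, (fS, x.1) ∈ KSP ∧ (fS, x.2) ∈ KSQ}) ∧
    (∀ x ∈ {x : (P → ℚ) × (Q → ℚ) | ∃ fS, (fS, x.1) ∈ KSP ∧ (fS, x.2) ∈ KSQ},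
     ∀ y ∈ {x : (P → ℚ) × (Q → ℚ) | ∃ fS, (fS, x.1) ∈ KSP ∧ (fS, x.2) ∈ KSQ},
      x + y ∈ {x : (P → ℚ) × (Q → ℚ) | ∃ fS, (fS, x.1) ∈ KSP ∧ (fS, x.2) ∈ KSQ}) ∧
    {y : (S → ℚ) × (Q → ℚ) | ∃ hP : P → ℚ, (y.1, hP) ∈ KSP ∧
      ((hP, y.2) : (P → ℚ) × (Q → ℚ)) ∈
        {x : (P → ℚ) × (Q → ℚ) | ∃ fS, (fS, x.1) ∈ KSP ∧ (fS, x.2) ∈ KSQ}} = KSQ := by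

  have haddP : ∀ x ∈ KSP, ∀ y ∈ KSP, x + y ∈ KSP := by
    intro x hx y hy
    have hneg : (0, 0) - y ∈ KSP := hsub _ h0 _ hy
    have := hsub _ hx _ hneg
    convert this using 1
    ext <;> simp
  have hz : ((0, 0) : (S → ℚ) × (Q → ℚ)) ∈ KSQ := hcon h0
  refine ⟨hz, ⟨0, h0, hz⟩, ?_, ?_⟩
  · rintro x ⟨fS, hx1, hx2⟩ y ⟨gS, hy1, hy2⟩
    refine ⟨fS + gS, ?_, ?_⟩
    · exact haddP _ hx1 _ hy1
    · exact hadd _ hx2 _ hy2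
  · ext ⟨fS, gQ⟩
    constructor
    · rintro ⟨hP, hfP, fS', hfP', hfQ⟩
      have hdiff : ((fS, hP) : (S → ℚ) × (P → ℚ)) - (fS', hP) ∈ KSP :=
        hsub _ hfP _ hfP'
      have hdiff' : ((fS - fS', 0) : (S → ℚ) × (P → ℚ)) ∈ KSP := by
        simpa [Prod.sub_def] using hdiff
      have hdQ : ((fS - fS', 0) : (S → ℚ) × (Q → ℚ)) ∈ KSQ := hcon hdiff'
      have := hadd _ hdQ _ hfQ
      simpa [Prod.add_def, sub_add_cancel] using this
    · intro hmem
      obtain ⟨hP, hfP⟩ := hres ⟨gQ, hmem⟩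
      exact ⟨hP, hfP, fS, hfP, hmem⟩
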